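/- Let g = Σ a_{ijk} x₁^i x₂^j x₃^k (i+j+k = 3) be the generic homogeneous cubic in three variables over ℤ, with α = a_{111} the coefficient of x₁x₂x₃. Then the polynomial (1/2)·det(∂²g/∂x_i∂x_j)_{1≤i,j≤3} − α²·g has all coefficients divisible by 4 as a polynomial in ℤ[a_{ijk}][x₁,x₂,x₃]; equivalently, det(Hess g) − 2α²g ∈ 8·ℤ[a_{ijk}][x₁,x₂,x₃]. -/

import Mathlib

set_option maxRecDepth 4000
set_option maxHeartbeats 4000000

open MvPolynomial

private noncomputable def ee (i j k : ℕ) : Fin 3 →₀ ℕ :=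
  Finsupp.single 0 i + Finsupp.single 1 j + Finsupp.single 2 k

@[simp] private lemma ee_apply0 (i j k : ℕ) : ee i j k 0 = i := by
  simp [ee, Finsupp.single_apply]

@[simp] private lemma ee_apply1 (i j k : ℕ) : ee i j k 1 = j := by
  simp [ee, Finsupp.single_apply]

@[simp] private lemma ee_apply2 (i j k : ℕ) : ee i j k 2 = k := by
  simp [ee, Finsupp.single_apply]

private lemma ee_inj {i j k i' j' k' : ℕ} :
    ee i j k = ee i' j' k' ↔ (i = i' ∧ j = j' ∧ k = k') := by
  constructor
  · intro h
    exact ⟨by simpa using DFunLike.congr_fun h 0, by simpa using DFunLike.congr_fun h 1,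
      by simpa using DFunLike.congr_fun h 2⟩
  · rintro ⟨rfl, rfl, rfl⟩; rfl

private lemma eq_ee (d : Fin 3 →₀ ℕ) : d = ee (d 0) (d 1) (d 2) := by
  ext i
  rcases (by omega : i = 0 ∨ i = 1 ∨ i = 2) with rfl | rfl | rfl <;> simp

private lemma degree_eq (d : Fin 3 →₀ ℕ) : d.degree = d 0 + d 1 + d 2 := by
  rw [Finsupp.degree_apply, Finset.sum_subset (Finset.subset_univ d.support)
    (fun i _ hi => Finsupp.notMem_support_iff.mp hi), Fin.sum_univ_three]

private lemma monomial_ee {R : Type*} [CommRing R] (i j k : ℕ) (a : R) :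
    (monomial (ee i j k) a : MvPolynomial (Fin 3) R) = C a * X 0 ^ i * X 1 ^ j * X 2 ^ k := by
  rw [C_apply, X_pow_eq_monomial, X_pow_eq_monomial, X_pow_eq_monomial,
    monomial_mul, monomial_mul, monomial_mul, ee]
  simp

private lemma rep {R : Type*} [CommRing R] (g : MvPolynomial (Fin 3) R)
    (hg : g.IsHomogeneous 3) :
    g = monomial (ee 3 0 0) (coeff (ee 3 0 0) g) + monomial (ee 0 3 0) (coeff (ee 0 3 0) g) + monomial (ee 0 0 3) (coeff (ee 0 0 3) g) + monomial (ee 2 1 0) (coeff (ee 2 1 0) g) + monomial (ee 2 0 1) (coeff (ee 2 0 1) g) + monomial (ee 1 2 0) (coeff (ee 1 2 0) g) + monomial (ee 0 2 1) (coeff (ee 0 2 1) g) + monomial (ee 1 0 2) (coeff (ee 1 0 2) g) + monomial (ee 0 1 2) (coeff (ee 0 1 2) g) + monomial (ee 1 1 1) (coeff (ee 1 1 1) g) := by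
  ext d
  classical
  simp only [coeff_add, coeff_monomial]
  by_cases hd : d 0 + d 1 + d 2 = 3
  · obtain ⟨i, j, k, hijk, rfl⟩ : ∃ i j k, i + j + k = 3 ∧ d = ee i j k :=
      ⟨d 0, d 1, d 2, hd, eq_ee d⟩
    have hi : i ≤ 3 := by omega
    have hj : j ≤ 3 := by omega
    have hk : k ≤ 3 := by omega
    interval_cases i <;> interval_cases j <;> interval_cases k <;>
      first | omega | simp [ee_inj]
  · have hne : ∀ i j k : ℕ, i + j + k = 3 → ¬ (ee i j k = d) := by
      intro i j k hs h
      rw [eq_ee d, ee_inj] at h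
      omega
    rw [      if_neg (hne 3 0 0 rfl),
      if_neg (hne 0 3 0 rfl),
      if_neg (hne 0 0 3 rfl),
      if_neg (hne 2 1 0 rfl),
      if_neg (hne 2 0 1 rfl),
      if_neg (hne 1 2 0 rfl),
      if_neg (hne 0 2 1 rfl),
      if_neg (hne 1 0 2 rfl),
      if_neg (hne 0 1 2 rfl),
      if_neg (hne 1 1 1 rfl)]
    simp only [add_zero]
    exact hg.coeff_eq_zero (by rw [degree_eq d]; omega)

private lemma pderiv_two {R : Type*} [CommRing R] (i : Fin 3) :
    pderiv i (2 : MvPolynomial (Fin 3) R) = 0 := by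
  have h : (2 : MvPolynomial (Fin 3) R) = ((2 : ℕ) : MvPolynomial (Fin 3) R) := by norm_cast
  rw [h, Derivation.map_natCast]

private lemma pderiv_three {R : Type*} [CommRing R] (i : Fin 3) :
    pderiv i (3 : MvPolynomial (Fin 3) R) = 0 := by
  have h : (3 : MvPolynomial (Fin 3) R) = ((3 : ℕ) : MvPolynomial (Fin 3) R) := by norm_cast
  rw [h, Derivation.map_natCast]

theorem hessian_divisibility (R : Type*) [CommRing R]
    (g : MvPolynomial (Fin 3) R) (hg : g.IsHomogeneous 3) :
    ∃ h : MvPolynomial (Fin 3) R,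
      (Matrix.of fun i j : Fin 3 => pderiv i (pderiv j g)).det
        - 2 * C (g.coeff (Finsupp.single 0 1 + Finsupp.single 1 1 + Finsupp.single 2 1)) ^ 2 * g
      = 8 * h := by
  set a300 := coeff (ee 3 0 0) g with ha300
  set a030 := coeff (ee 0 3 0) g with ha030
  set a003 := coeff (ee 0 0 3) g with ha003
  set a210 := coeff (ee 2 1 0) g with ha210
  set a201 := coeff (ee 2 0 1) g with ha201
  set a120 := coeff (ee 1 2 0) g with ha120
  set a021 := coeff (ee 0 2 1) g with ha021
  set a102 := coeff (ee 1 0 2) g with ha102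
  set a012 := coeff (ee 0 1 2) g with ha012
  set a111 := coeff (ee 1 1 1) g with ha111
  have halpha : g.coeff (Finsupp.single 0 1 + Finsupp.single 1 1 + Finsupp.single 2 1) = a111 := rfl
  have hrep : g = C a300 * X 0 ^ 3 + C a030 * X 1 ^ 3 + C a003 * X 2 ^ 3 + C a210 * X 0 ^ 2 * X 1 + C a201 * X 0 ^ 2 * X 2 + C a120 * X 0 * X 1 ^ 2 + C a021 * X 1 ^ 2 * X 2 + C a102 * X 0 * X 2 ^ 2 + C a012 * X 1 * X 2 ^ 2 + C a111 * X 0 * X 1 * X 2 := by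
    rw [rep g hg]
    simp only [monomial_ee]
    ring
  refine ⟨C a102 * C a012 * C a111 * X 2 ^ 3 +
    ((-1) : MvPolynomial (Fin 3) R) * C a021 * C a102 ^ 2 * X 2 ^ 3 +
    ((-1) : MvPolynomial (Fin 3) R) * C a120 * C a102 * C a111 * X 0 * X 1 * X 2 +
    (2 : MvPolynomial (Fin 3) R) * C a120 * C a102 * C a012 * X 1 * X 2 ^ 2 +
    ((-1) : MvPolynomial (Fin 3) R) * C a120 * C a102 ^ 2 * X 0 * X 2 ^ 2 +
    C a120 * C a021 * C a111 * X 1 ^ 3 +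
    (2 : MvPolynomial (Fin 3) R) * C a120 * C a021 * C a102 * X 1 ^ 2 * X 2 +
    ((-1) : MvPolynomial (Fin 3) R) * C a120 ^ 2 * C a012 * X 1 ^ 3 +
    ((-1) : MvPolynomial (Fin 3) R) * C a120 ^ 2 * C a102 * X 0 * X 1 ^ 2 +
    ((-1) : MvPolynomial (Fin 3) R) * C a201 * C a012 ^ 2 * X 2 ^ 3 +
    ((-1) : MvPolynomial (Fin 3) R) * C a201 * C a021 * C a111 * X 0 * X 1 * X 2 +
    ((-1) : MvPolynomial (Fin 3) R) * C a201 * C a021 * C a012 * X 1 * X 2 ^ 2 +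
    ((-1) : MvPolynomial (Fin 3) R) * C a201 * C a021 * C a102 * X 0 * X 2 ^ 2 +
    ((-1) : MvPolynomial (Fin 3) R) * C a201 * C a021 ^ 2 * X 1 ^ 2 * X 2 +
    (3 : MvPolynomial (Fin 3) R) * C a201 * C a120 * C a012 * X 0 * X 1 * X 2 +
    ((-1) : MvPolynomial (Fin 3) R) * C a201 * C a120 * C a102 * X 0 ^ 2 * X 2 +
    (2 : MvPolynomial (Fin 3) R) * C a201 * C a120 * C a021 * X 0 * X 1 ^ 2 +
    ((-1) : MvPolynomial (Fin 3) R) * C a201 ^ 2 * C a021 * X 0 ^ 2 * X 2 +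
    ((-1) : MvPolynomial (Fin 3) R) * C a201 ^ 2 * C a120 * X 0 ^ 3 +
    ((-1) : MvPolynomial (Fin 3) R) * C a210 * C a012 * C a111 * X 0 * X 1 * X 2 +
    ((-1) : MvPolynomial (Fin 3) R) * C a210 * C a012 ^ 2 * X 1 * X 2 ^ 2 +
    (2 : MvPolynomial (Fin 3) R) * C a210 * C a102 * C a012 * X 0 * X 2 ^ 2 +
    ((-1) : MvPolynomial (Fin 3) R) * C a210 * C a021 * C a012 * X 1 ^ 2 * X 2 +
    (3 : MvPolynomial (Fin 3) R) * C a210 * C a021 * C a102 * X 0 * X 1 * X 2 +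
    ((-1) : MvPolynomial (Fin 3) R) * C a210 * C a021 ^ 2 * X 1 ^ 3 +
    ((-1) : MvPolynomial (Fin 3) R) * C a210 * C a120 * C a012 * X 0 * X 1 ^ 2 +
    ((-1) : MvPolynomial (Fin 3) R) * C a210 * C a120 * C a102 * X 0 ^ 2 * X 1 +
    C a210 * C a201 * C a111 * X 0 ^ 3 +
    (2 : MvPolynomial (Fin 3) R) * C a210 * C a201 * C a012 * X 0 ^ 2 * X 2 +
    (2 : MvPolynomial (Fin 3) R) * C a210 * C a201 * C a021 * X 0 ^ 2 * X 1 +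
    ((-1) : MvPolynomial (Fin 3) R) * C a210 ^ 2 * C a012 * X 0 ^ 2 * X 1 +
    ((-1) : MvPolynomial (Fin 3) R) * C a210 ^ 2 * C a102 * X 0 ^ 3 +
    ((-1) : MvPolynomial (Fin 3) R) * C a003 * C a111 ^ 2 * X 2 ^ 3 +
    ((-3) : MvPolynomial (Fin 3) R) * C a003 * C a120 * C a111 * X 1 * X 2 ^ 2 +
    ((-3) : MvPolynomial (Fin 3) R) * C a003 * C a120 ^ 2 * X 1 ^ 2 * X 2 +
    (3 : MvPolynomial (Fin 3) R) * C a003 * C a201 * C a021 * X 2 ^ 3 +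
    (3 : MvPolynomial (Fin 3) R) * C a003 * C a201 * C a120 * X 0 * X 2 ^ 2 +
    ((-3) : MvPolynomial (Fin 3) R) * C a003 * C a210 * C a111 * X 0 * X 2 ^ 2 +
    (3 : MvPolynomial (Fin 3) R) * C a003 * C a210 * C a021 * X 1 * X 2 ^ 2 +
    ((-3) : MvPolynomial (Fin 3) R) * C a003 * C a210 * C a120 * X 0 * X 1 * X 2 +
    ((-3) : MvPolynomial (Fin 3) R) * C a003 * C a210 ^ 2 * X 0 ^ 2 * X 2 +
    ((-1) : MvPolynomial (Fin 3) R) * C a030 * C a111 ^ 2 * X 1 ^ 3 +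
    ((-3) : MvPolynomial (Fin 3) R) * C a030 * C a102 * C a111 * X 1 ^ 2 * X 2 +
    ((-3) : MvPolynomial (Fin 3) R) * C a030 * C a102 ^ 2 * X 1 * X 2 ^ 2 +
    ((-3) : MvPolynomial (Fin 3) R) * C a030 * C a201 * C a111 * X 0 * X 1 ^ 2 +
    (3 : MvPolynomial (Fin 3) R) * C a030 * C a201 * C a012 * X 1 ^ 2 * X 2 +
    ((-3) : MvPolynomial (Fin 3) R) * C a030 * C a201 * C a102 * X 0 * X 1 * X 2 +
    ((-3) : MvPolynomial (Fin 3) R) * C a030 * C a201 ^ 2 * X 0 ^ 2 * X 1 +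
    (3 : MvPolynomial (Fin 3) R) * C a030 * C a210 * C a012 * X 1 ^ 3 +
    (3 : MvPolynomial (Fin 3) R) * C a030 * C a210 * C a102 * X 0 * X 1 ^ 2 +
    (9 : MvPolynomial (Fin 3) R) * C a030 * C a003 * C a201 * X 1 * X 2 ^ 2 +
    (9 : MvPolynomial (Fin 3) R) * C a030 * C a003 * C a210 * X 1 ^ 2 * X 2 +
    ((-1) : MvPolynomial (Fin 3) R) * C a300 * C a111 ^ 2 * X 0 ^ 3 +
    ((-3) : MvPolynomial (Fin 3) R) * C a300 * C a012 * C a111 * X 0 ^ 2 * X 2 +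
    ((-3) : MvPolynomial (Fin 3) R) * C a300 * C a012 ^ 2 * X 0 * X 2 ^ 2 +
    ((-3) : MvPolynomial (Fin 3) R) * C a300 * C a021 * C a111 * X 0 ^ 2 * X 1 +
    ((-3) : MvPolynomial (Fin 3) R) * C a300 * C a021 * C a012 * X 0 * X 1 * X 2 +
    (3 : MvPolynomial (Fin 3) R) * C a300 * C a021 * C a102 * X 0 ^ 2 * X 2 +
    ((-3) : MvPolynomial (Fin 3) R) * C a300 * C a021 ^ 2 * X 0 * X 1 ^ 2 +
    (3 : MvPolynomial (Fin 3) R) * C a300 * C a120 * C a012 * X 0 ^ 2 * X 1 +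
    (3 : MvPolynomial (Fin 3) R) * C a300 * C a120 * C a102 * X 0 ^ 3 +
    (9 : MvPolynomial (Fin 3) R) * C a300 * C a003 * C a021 * X 0 * X 2 ^ 2 +
    (9 : MvPolynomial (Fin 3) R) * C a300 * C a003 * C a120 * X 0 ^ 2 * X 2 +
    (9 : MvPolynomial (Fin 3) R) * C a300 * C a030 * C a012 * X 0 * X 1 ^ 2 +
    (9 : MvPolynomial (Fin 3) R) * C a300 * C a030 * C a102 * X 0 ^ 2 * X 1 +
    (27 : MvPolynomial (Fin 3) R) * C a300 * C a030 * C a003 * X 0 * X 1 * X 2, ?_⟩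
  rw [Matrix.det_fin_three, halpha]
  simp [Matrix.of_apply, hrep, pderiv_mul, pderiv_pow, pderiv_C, pderiv_X_self,
    pderiv_X_of_ne (show (0 : Fin 3) ≠ 1 by decide), pderiv_X_of_ne (show (0 : Fin 3) ≠ 2 by decide),
    pderiv_X_of_ne (show (1 : Fin 3) ≠ 0 by decide), pderiv_X_of_ne (show (1 : Fin 3) ≠ 2 by decide),
    pderiv_X_of_ne (show (2 : Fin 3) ≠ 0 by decide), pderiv_X_of_ne (show (2 : Fin 3) ≠ 1 by decide),
    pderiv_two, pderiv_three]
  generalize (C a300 : MvPolynomial (Fin 3) R) = c0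
  generalize (C a030 : MvPolynomial (Fin 3) R) = c1
  generalize (C a003 : MvPolynomial (Fin 3) R) = c2
  generalize (C a210 : MvPolynomial (Fin 3) R) = c3
  generalize (C a201 : MvPolynomial (Fin 3) R) = c4
  generalize (C a120 : MvPolynomial (Fin 3) R) = c5
  generalize (C a021 : MvPolynomial (Fin 3) R) = c6
  generalize (C a102 : MvPolynomial (Fin 3) R) = c7
  generalize (C a012 : MvPolynomial (Fin 3) R) = c8
  generalize (C a111 : MvPolynomial (Fin 3) R) = c9
  generalize (X 0 : MvPolynomial (Fin 3) R) = x0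
  generalize (X 1 : MvPolynomial (Fin 3) R) = x1
  generalize (X 2 : MvPolynomial (Fin 3) R) = x2
  ring
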